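/- Let q ∈ ℤ[i] with q ≡ 1 (mod λ³) and write q = q₁q₂²q₃³q₄⁴q₅⁴ where all qᵢ ≡ 1 (mod λ³), q₁q₂q₃q₄ is squarefree, the qᵢ (i=1..4) are pairwise coprime, and q₅ | (q₁q₂q₃q₄)^∞. Then the quartic character χ_q := (·/q)₄ factors as χ_q = χ_{q₁} · χ_{q₂}² · conj(χ_{q₃}) · 1_{q₄}, where 1_{q₄} is the trivial character modulo q₄ℤ[i]; in particular χ_q has conductor rad(q)·ℤ[i], and χ_q is primitive if and only if q₄ = 1. -/

import Mathlib

noncomputable section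

open scoped Classical
open Complex

abbrev Zi := GaussianInt

def lam : Zi := ⟨1, 1⟩

def Ni (x : Zi) : ℤ := Zsqrtd.norm x

/-- ě(z) = e^{2πi (z + z̄)} -/
def eCheck (z : ℂ) : ℂ := Complex.exp (2 * Real.pi * Complex.I * (z + (starRingEnd ℂ) z))

/-- Quartic residue symbol at a prime modulus: the unique fourth root of unity
congruent to `α ^ ((N π - 1)/4)` modulo `π`. -/
def quarticPrime (α π : Zi) : Zi :=
  if h : ∃ u : Zi, u ^ 4 = 1 ∧ π ∣ α ^ ((Ni π - 1) / 4).toNat - u then h.choose else 0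

/-- Quartic residue symbol `(α/γ)₄`, extended multiplicatively over the prime
factorization of `γ`, and declared `0` when `α, γ` are not coprime. -/
def quarticSym (α γ : Zi) : ℂ :=
  if IsCoprime α γ then
    ((UniqueFactorizationMonoid.factors γ).map
      fun π => GaussianInt.toComplex (quarticPrime α π)).prod
  else 0

/-- Quadratic residue symbol `(α/γ)₂ = (α/γ)₄²`. -/
def quadSym (α γ : Zi) : ℂ := quarticSym α γ ^ 2

/-- Quartic Gauss sum `g₄(ν, c) = Σ_{d mod c} (d/c)₄ ě(ν d / c)`. -/
def g4 (ν : ℂ) (c : Zi) : ℂ :=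
  ∑ᶠ x : Zi ⧸ Ideal.span {c},
    quarticSym (Quotient.out x) c *
      eCheck (ν * GaussianInt.toComplex (Quotient.out x) / GaussianInt.toComplex c)

/-- Quadratic Gauss sum `g₂(ν, c) = Σ_{d mod c} (d/c)₂ ě(ν d / c)`. -/
def g2 (ν : ℂ) (c : Zi) : ℂ :=
  ∑ᶠ x : Zi ⧸ Ideal.span {c},
    quadSym (Quotient.out x) c *
      eCheck (ν * GaussianInt.toComplex (Quotient.out x) / GaussianInt.toComplex c)

/-- Euler totient on `ℤ[i]`. -/
def phiZ (c : Zi) : ℕ := Nat.card ((Zi ⧸ Ideal.span {c})ˣ)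

/-- `χ_q` factors through the modulus `m`: its values on residues coprime to `q`
depend only on the residue modulo `m`. -/
def FactorsThroughMod (q m : Zi) : Prop :=
  ∀ α β : Zi, IsCoprime α q → IsCoprime β q → m ∣ α - β → quarticSym α q = quarticSym β q

def ziEquiv : Zi ≃ₗ[ℤ] (Fin 2 → ℤ) where
  toFun z := ![z.re, z.im]
  invFun v := ⟨v 0, v 1⟩
  map_add' a b := by funext i; fin_cases i <;> simp
  map_smul' c a := by funext i; fin_cases i <;> simp [zsmul_eq_mul]
  left_inv z := by simp
  right_inv v := by funext i; fin_cases i <;> simp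

def ziBasis : Module.Basis (Fin 2) ℤ Zi := Module.Basis.ofEquivFun ziEquiv

instance : Module.Free ℤ Zi := Module.Free.of_basis ziBasis
instance : Module.Finite ℤ Zi := Module.Finite.of_basis ziBasis

lemma algebraNorm_eq (x : Zi) : Algebra.norm ℤ x = Ni x := by
  have hb0 : ziBasis 0 = (⟨1,0⟩ : Zi) := by
    apply ziEquiv.injective
    simp [ziBasis, Module.Basis.ofEquivFun]
    funext i; fin_cases i <;> rfl
  have hb1 : ziBasis 1 = (⟨0,1⟩ : Zi) := by
    apply ziEquiv.injective
    simp [ziBasis, Module.Basis.ofEquivFun]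
    funext i; fin_cases i <;> rfl
  rw [Algebra.norm_eq_matrix_det ziBasis, Matrix.det_fin_two]
  simp only [Algebra.leftMulMatrix_eq_repr_mul, hb0, hb1]
  simp only [ziBasis, Module.Basis.ofEquivFun_repr_apply, ziEquiv, LinearEquiv.coe_mk,
    LinearMap.coe_mk, AddHom.coe_mk]
  simp only [Matrix.cons_val_zero, Matrix.cons_val_one, Matrix.head_cons]
  simp only [Zsqrtd.re_mul, Zsqrtd.im_mul, Ni, Zsqrtd.norm]
  ring

lemma card_quot (π : Zi) :
    Nat.card (Zi ⧸ Ideal.span {π}) = (Ni π).natAbs := by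
  rw [← Submodule.cardQuot_apply, ← Ideal.absNorm_apply, Ideal.absNorm_span_singleton,
    algebraNorm_eq]

namespace QC

/-! ### basics -/

lemma not_isUnit_lam : ¬ IsUnit lam := by
  rw [← Zsqrtd.norm_eq_one_iff]; decide

lemma lam_dvd_two : lam ∣ 2 := ⟨⟨1,-1⟩, by decide⟩

lemma prime_dvd_lam_of_dvd_two {π : Zi} (hπ : Prime π) (h2 : π ∣ 2) : π ∣ lam := by
  have h : (2 : Zi) = lam * lam * ⟨0,-1⟩ := by decide
  rw [h] at h2
  rcases hπ.dvd_mul.mp h2 with h' | h'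
  · rcases hπ.dvd_mul.mp h' with h'' | h'' <;> exact h''
  · exact absurd (isUnit_of_dvd_unit h' (by rw [← Zsqrtd.norm_eq_one_iff]; decide)) hπ.not_unit

lemma isCoprime_lam {x : Zi} (h : lam ^ 3 ∣ x - 1) : IsCoprime x lam := by
  obtain ⟨t, ht⟩ := h
  exact ⟨1, -(lam ^ 2 * t), by linear_combination ht⟩

lemma ne_zero_of_mod (h : lam ^ 3 ∣ x - 1) : (x : Zi) ≠ 0 := by
  rintro rfl
  have h0 : IsUnit (0 - 1 : Zi) := by rw [zero_sub]; exact isUnit_one.neg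
  have : IsUnit (lam ^ 3) := isUnit_of_dvd_unit h h0
  rw [← Zsqrtd.norm_eq_one_iff] at this
  revert this; decide

/-- classification of fourth roots of unity -/
lemma fourth_roots {u : Zi} (h : u ^ 4 = 1) :
    u = 1 ∨ u = -1 ∨ u = ⟨0,1⟩ ∨ u = ⟨0,-1⟩ := by
  have hu : IsUnit u := IsUnit.of_mul_eq_one (u ^ 3) (by linear_combination h)
  have hn : (Zsqrtd.norm u).natAbs = 1 := Zsqrtd.norm_eq_one_iff.mpr hu
  have hnn : 0 ≤ Zsqrtd.norm u := Zsqrtd.norm_nonneg (by norm_num) u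
  have h1 : Zsqrtd.norm u = 1 := by omega
  simp only [Zsqrtd.norm] at h1
  have h2 : u.re * u.re + u.im * u.im = 1 := by linarith
  obtain ⟨a, b⟩ := u
  simp only [Zsqrtd.ext_iff] at *
  have hre2 : a * a ≤ 1 := by nlinarith [mul_self_nonneg b]
  have him2 : b * b ≤ 1 := by nlinarith [mul_self_nonneg a]
  have ha1 : -1 ≤ a := by nlinarith [mul_self_nonneg (a + 1)]
  have ha2 : a ≤ 1 := by nlinarith [mul_self_nonneg (a - 1)]
  have hb1 : -1 ≤ b := by nlinarith [mul_self_nonneg (b + 1)]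
  have hb2 : b ≤ 1 := by nlinarith [mul_self_nonneg (b - 1)]
  interval_cases a <;> interval_cases b <;> simp_all <;> omega


/-! ### odd primes -/

lemma dvd_of_prime_eq_mul {π c t : Zi} (hπ : Prime π) (hc : ¬ IsUnit c) (h : π = c * t) :
    π ∣ c := by
  rcases hπ.irreducible.isUnit_or_isUnit h with h' | h'
  · exact absurd h' hc
  · obtain ⟨u, rfl⟩ := h'
    exact ⟨(u⁻¹ : Ziˣ), by rw [h, mul_assoc, Units.mul_inv, mul_one]⟩

lemma not_isUnit_two : ¬ IsUnit (2 : Zi) := by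
  rw [← Zsqrtd.norm_eq_one_iff]; decide

/-- a prime not dividing 2 has norm ≡ 1 mod 4 -/
lemma four_dvd_norm_sub_one {π : Zi} (hπ : Prime π) (h2 : ¬ π ∣ 2) :
    4 ∣ Ni π - 1 := by
  rcases Int.even_or_odd π.re with ⟨a, ha⟩ | ⟨a, ha⟩ <;>
    rcases Int.even_or_odd π.im with ⟨b, hb⟩ | ⟨b, hb⟩
  · exact absurd (dvd_of_prime_eq_mul hπ not_isUnit_two
      (show π = 2 * ⟨a, b⟩ by rw [Zsqrtd.ext_iff]; refine ⟨?_, ?_⟩ <;> simp <;> omega)) h2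
  · exact ⟨a * a + b * b + b, by simp [Ni, Zsqrtd.norm, ha, hb]; ring⟩
  · exact ⟨a * a + a + b * b, by simp [Ni, Zsqrtd.norm, ha, hb]; ring⟩
  · exact absurd ((dvd_of_prime_eq_mul hπ not_isUnit_lam
      (show π = lam * ⟨a + b + 1, b - a⟩ by
        rw [Zsqrtd.ext_iff]
        refine ⟨?_, ?_⟩ <;> simp [lam, Zsqrtd.re_mul, Zsqrtd.im_mul] <;> omega)).trans
      lam_dvd_two) h2

/-! ### finite field facts -/

lemma norm_nonneg' (x : Zi) : 0 ≤ Ni x := Zsqrtd.norm_nonneg (by norm_num) x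

lemma two_le_norm {π : Zi} (hπ : Prime π) : 2 ≤ Ni π := by
  have h0 : Ni π ≠ 0 := by
    simp only [Ni, Ne]
    rw [Zsqrtd.norm_eq_zero (fun n => by nlinarith [mul_self_nonneg n])]
    exact hπ.ne_zero
  have h1 : (Ni π).natAbs ≠ 1 := fun h => hπ.not_unit (Zsqrtd.norm_eq_one_iff.mp h)
  have := norm_nonneg' π
  omega

lemma span_ne_bot {π : Zi} (hπ : Prime π) : Ideal.span {π} ≠ (⊥ : Ideal Zi) := by
  rw [Ne, Ideal.span_singleton_eq_bot]
  exact hπ.ne_zero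

lemma four_mul_toNat {π : Zi} (hπ : Prime π) (h2 : ¬ π ∣ 2) :
    4 * ((Ni π - 1) / 4).toNat = (Ni π).natAbs - 1 ∧ 1 ≤ ((Ni π - 1) / 4).toNat := by
  obtain ⟨c, hc⟩ := four_dvd_norm_sub_one hπ h2
  have := two_le_norm hπ
  omega

lemma pow_card_sub_one {π : Zi} (hπ : Prime π) {α : Zi} (hα : ¬ π ∣ α) :
    π ∣ α ^ ((Ni π).natAbs - 1) - 1 := by
  haveI : (Ideal.span {π}).IsMaximal := PrincipalIdealRing.isMaximal_of_irreducible hπ.irreducible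
  letI : Field (Zi ⧸ Ideal.span {π}) := Ideal.Quotient.field _
  letI : Fintype (Zi ⧸ Ideal.span {π}) :=
    @Fintype.ofFinite _ (Ideal.finiteQuotientOfFreeOfNeBot _ (span_ne_bot hπ))
  have hcard : Fintype.card (Zi ⧸ Ideal.span {π}) = (Ni π).natAbs := by
    rw [← Nat.card_eq_fintype_card, card_quot]
  have hβ : Ideal.Quotient.mk (Ideal.span {π}) α ≠ 0 := by
    rw [Ne, Ideal.Quotient.eq_zero_iff_mem, Ideal.mem_span_singleton]
    exact hα
  have h := FiniteField.pow_card_sub_one_eq_one _ hβ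
  rw [hcard] at h
  rw [← Ideal.mem_span_singleton, ← Ideal.Quotient.eq_zero_iff_mem]
  push_cast [map_sub, map_pow, map_one]
  rw [h, sub_self]

lemma exists_root {π : Zi} (hπ : Prime π) (h2 : ¬ π ∣ 2) {α : Zi} (hα : ¬ π ∣ α) :
    ∃ u : Zi, u ^ 4 = 1 ∧ π ∣ α ^ ((Ni π - 1) / 4).toNat - u := by
  obtain ⟨h4k, hk1⟩ := four_mul_toNat hπ h2
  set k := ((Ni π - 1) / 4).toNat with hk
  have hdvd : π ∣ (α ^ k) ^ 4 - 1 := by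
    rw [← pow_mul, mul_comm, h4k]
    exact pow_card_sub_one hπ hα
  have hi : (⟨0,1⟩ : Zi) ^ 2 = -1 := by decide
  have hfac : (α ^ k) ^ 4 - 1 =
      (α ^ k - 1) * (α ^ k + 1) * ((α ^ k - ⟨0,1⟩) * (α ^ k + ⟨0,1⟩)) := by
    linear_combination ((α ^ k) ^ 2 - 1) * hi
  rw [hfac] at hdvd
  rcases hπ.dvd_or_dvd hdvd with h | h
  · rcases hπ.dvd_or_dvd h with h' | h'
    · exact ⟨1, by decide, h'⟩
    · exact ⟨-1, by decide, by rwa [sub_neg_eq_add]⟩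
  · rcases hπ.dvd_or_dvd h with h' | h'
    · exact ⟨⟨0,1⟩, by decide, h'⟩
    · refine ⟨⟨0,-1⟩, by decide, ?_⟩
      have hneg : (⟨0,-1⟩ : Zi) = -⟨0,1⟩ := by decide
      rwa [hneg, sub_neg_eq_add]

lemma exists_nonresidue {π : Zi} (hπ : Prime π) (h2 : ¬ π ∣ 2) :
    ∃ x : Zi, ¬ π ∣ x ∧ ¬ π ∣ x ^ (2 * ((Ni π - 1) / 4).toNat) - 1 := by
  obtain ⟨h4k, hk1⟩ := four_mul_toNat hπ h2
  set k := ((Ni π - 1) / 4).toNat with hk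
  haveI : (Ideal.span {π}).IsMaximal := PrincipalIdealRing.isMaximal_of_irreducible hπ.irreducible
  letI : Field (Zi ⧸ Ideal.span {π}) := Ideal.Quotient.field _
  letI : Fintype (Zi ⧸ Ideal.span {π}) :=
    @Fintype.ofFinite _ (Ideal.finiteQuotientOfFreeOfNeBot _ (span_ne_bot hπ))
  have hcard : Fintype.card (Zi ⧸ Ideal.span {π}) = (Ni π).natAbs := by
    rw [← Nat.card_eq_fintype_card, card_quot]
  obtain ⟨g, hg⟩ := IsCyclic.exists_generator (α := (Zi ⧸ Ideal.span {π})ˣ)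
  have horder : orderOf g = 4 * k := by
    rw [orderOf_eq_card_of_forall_mem_zpowers hg, Nat.card_eq_fintype_card, Fintype.card_units,
      hcard, h4k]
  obtain ⟨x, hx⟩ := Ideal.Quotient.mk_surjective (I := Ideal.span {π}) (g : Zi ⧸ Ideal.span {π})
  refine ⟨x, ?_, ?_⟩
  · rw [← Ideal.mem_span_singleton, ← Ideal.Quotient.eq_zero_iff_mem, hx]
    exact g.ne_zero
  · rw [← Ideal.mem_span_singleton, ← Ideal.Quotient.eq_zero_iff_mem, map_sub, map_pow, map_one,
      hx, sub_eq_zero, ← Units.val_pow_eq_pow_val, ← Units.val_one (α := Zi ⧸ Ideal.span {π})]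
    intro hgg
    have : orderOf g ∣ 2 * k := orderOf_dvd_iff_pow_eq_one.mpr (Units.ext hgg)
    rw [horder] at this
    have := Nat.le_of_dvd (by omega) this
    omega

/-! ### quarticPrime -/

lemma roots_unique {π u v : Zi} (hπ : Prime π) (h2 : ¬ π ∣ 2) (hu : u ^ 4 = 1)
    (hv : v ^ 4 = 1) (hd : π ∣ u - v) : u = v := by
  by_contra hne
  have hn4 : Zsqrtd.norm (u - v) ∣ (4 : ℤ) := by
    rcases fourth_roots hu with rfl | rfl | rfl | rfl <;>
      rcases fourth_roots hv with rfl | rfl | rfl | rfl <;>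
        first | exact absurd rfl hne | decide
  have hd4 : (u - v) ∣ (4 : Zi) := by
    refine (Dvd.intro _ (Zsqrtd.norm_eq_mul_conj (u - v)).symm).trans ?_
    have h := map_dvd (Int.castRingHom Zi) hn4
    have h4 : (Int.castRingHom Zi) (4 : ℤ) = (4 : Zi) := by norm_num
    rwa [h4] at h
  have h24 : π ∣ (2 : Zi) * 2 := by
    have : ((2 : Zi) * 2) = 4 := by norm_num
    rw [this]; exact hd.trans hd4
  rcases hπ.dvd_or_dvd h24 with h | h <;> exact absurd h h2

lemma quarticPrime_spec {π α : Zi} (hπ : Prime π) (h2 : ¬ π ∣ 2) (hα : ¬ π ∣ α) :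
    (quarticPrime α π) ^ 4 = 1 ∧ π ∣ α ^ ((Ni π - 1) / 4).toNat - quarticPrime α π := by
  rw [quarticPrime, dif_pos (exists_root hπ h2 hα)]
  exact (exists_root hπ h2 hα).choose_spec

lemma quarticPrime_eq {π α u : Zi} (hπ : Prime π) (h2 : ¬ π ∣ 2) (hα : ¬ π ∣ α)
    (hu : u ^ 4 = 1) (hd : π ∣ α ^ ((Ni π - 1) / 4).toNat - u) : quarticPrime α π = u := by
  obtain ⟨h4, hd'⟩ := quarticPrime_spec hπ h2 hα
  refine roots_unique hπ h2 h4 hu ?_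
  have h := dvd_sub hd hd'
  have heq : (α ^ ((Ni π - 1) / 4).toNat - u) - (α ^ ((Ni π - 1) / 4).toNat - quarticPrime α π)
      = quarticPrime α π - u := by ring
  rwa [heq] at h

lemma not_dvd_one {π : Zi} (hπ : Prime π) : ¬ π ∣ (1 : Zi) :=
  fun h => hπ.not_unit (isUnit_of_dvd_one h)

lemma quarticPrime_one {π : Zi} (hπ : Prime π) (h2 : ¬ π ∣ 2) : quarticPrime 1 π = 1 :=
  quarticPrime_eq hπ h2 (not_dvd_one hπ) (by norm_num) (by simp)

lemma Ni_assoc {π π' : Zi} (h : Associated π π') : Ni π = Ni π' := by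
  obtain ⟨u, rfl⟩ := h
  have h1 : (Zsqrtd.norm (u : Zi)).natAbs = 1 := Zsqrtd.norm_eq_one_iff.mpr u.isUnit
  have h2 := norm_nonneg' (u : Zi)
  have h3 : Ni (u : Zi) = 1 := by simp only [Ni] at *; omega
  simp only [Ni, Zsqrtd.norm_mul]
  rw [show Zsqrtd.norm (u : Zi) = 1 from h3]
  ring

lemma quarticPrime_assoc {π π' α : Zi} (hπ : Prime π) (h2 : ¬ π ∣ 2) (hα : ¬ π ∣ α)
    (h : Associated π π') : quarticPrime α π = quarticPrime α π' := by
  have hπ' : Prime π' := h.prime hπ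
  have hdd := h.dvd_iff_dvd_left (c := (2 : Zi))
  obtain ⟨h4, hd⟩ := quarticPrime_spec hπ h2 hα
  refine (quarticPrime_eq hπ' (fun hh => h2 ((h.dvd_iff_dvd_left).mpr hh))
    (fun hh => hα ((h.dvd_iff_dvd_left).mpr hh)) h4 ?_).symm
  rw [← Ni_assoc h]
  exact (h.dvd_iff_dvd_left).mp hd

lemma quarticPrime_congr {π α β : Zi} (hπ : Prime π) (h2 : ¬ π ∣ 2) (hα : ¬ π ∣ α)
    (hd : π ∣ α - β) : quarticPrime α π = quarticPrime β π := by
  have hβ : ¬ π ∣ β := by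
    intro h
    apply hα
    have := dvd_add h hd
    rwa [show β + (α - β) = α by ring] at this
  obtain ⟨h4, hda⟩ := quarticPrime_spec hπ h2 hα
  refine (quarticPrime_eq hπ h2 hβ h4 ?_).symm
  have hk : π ∣ α ^ ((Ni π - 1) / 4).toNat - β ^ ((Ni π - 1) / 4).toNat :=
    hd.trans (sub_dvd_pow_sub_pow α β _)
  have h := dvd_sub hda hk
  rwa [show (α ^ ((Ni π - 1) / 4).toNat - quarticPrime α π) -
      (α ^ ((Ni π - 1) / 4).toNat - β ^ ((Ni π - 1) / 4).toNat)
      = β ^ ((Ni π - 1) / 4).toNat - quarticPrime α π by ring] at h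

/-! ### quarticSym -/

open UniqueFactorizationMonoid

lemma not_two_of_factor {γ π : Zi} (hodd : IsCoprime γ lam) (hπ : Prime π) (hπγ : π ∣ γ) :
    ¬ π ∣ 2 :=
  fun h => hπ.not_unit (hodd.isUnit_of_dvd' hπγ (prime_dvd_lam_of_dvd_two hπ h))

lemma not_dvd_of_coprime {α γ π : Zi} (h : IsCoprime α γ) (hπ : Prime π) (hπγ : π ∣ γ) :
    ¬ π ∣ α :=
  fun hh => hπ.not_unit (h.isUnit_of_dvd' hh hπγ)

lemma conj_of_pow_four {z : ℂ} (h : z ^ 4 = 1) : (starRingEnd ℂ) z = z ^ 3 := by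
  have hz : z ≠ 0 := by rintro rfl; simp at h
  apply mul_left_cancel₀ hz
  have h4 : z * z ^ 3 = 1 := by rw [← pow_succ']; exact h
  rw [h4, Complex.mul_conj]
  have habs : ‖z‖ = 1 := by
    have h2 := congrArg (‖·‖) h
    simp only [norm_pow, norm_one] at h2
    nlinarith [norm_nonneg z, sq_nonneg (‖z‖ - 1),
      sq_nonneg (‖z‖ + 1), sq_nonneg (‖z‖ ^ 2 - 1)]
  rw [Complex.normSq_eq_norm_sq, habs]
  norm_num

lemma quarticSym_pow_four {α γ : Zi} (h : IsCoprime α γ) (hodd : IsCoprime γ lam) :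
    quarticSym α γ ^ 4 = 1 := by
  rw [quarticSym, if_pos h, ← Multiset.prod_map_pow]
  apply Multiset.prod_eq_one
  intro x hx
  obtain ⟨π, hπ, rfl⟩ := Multiset.mem_map.mp hx
  rw [← map_pow, (quarticPrime_spec (prime_of_factor _ hπ)
    (not_two_of_factor hodd (prime_of_factor _ hπ) (dvd_of_mem_factors hπ))
    (not_dvd_of_coprime h (prime_of_factor _ hπ) (dvd_of_mem_factors hπ))).1, map_one]

lemma quarticSym_conj {α γ : Zi} (hodd : IsCoprime γ lam) :
    (starRingEnd ℂ) (quarticSym α γ) = quarticSym α γ ^ 3 := by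
  by_cases h : IsCoprime α γ
  · exact conj_of_pow_four (quarticSym_pow_four h hodd)
  · rw [quarticSym, if_neg h]; simp

lemma quarticSym_mul {α γ δ : Zi} (hγ : γ ≠ 0) (hδ : δ ≠ 0)
    (hoγ : IsCoprime γ lam) (hoδ : IsCoprime δ lam) :
    quarticSym α (γ * δ) = quarticSym α γ * quarticSym α δ := by
  by_cases h : IsCoprime α (γ * δ)
  · have hγc : IsCoprime α γ := h.of_isCoprime_of_dvd_right (Dvd.intro _ rfl)
    have hδc : IsCoprime α δ := h.of_isCoprime_of_dvd_right (dvd_mul_left _ _)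
    rw [quarticSym, if_pos h, quarticSym, if_pos hγc, quarticSym, if_pos hδc]
    have hprod : Associated (factors (γ * δ)).prod (factors γ + factors δ).prod := by
      rw [Multiset.prod_add]
      exact (factors_prod (mul_ne_zero hγ hδ)).trans
        ((Associated.mul_mul (factors_prod hγ) (factors_prod hδ)).symm)
    have hrel : Multiset.Rel Associated (factors (γ * δ)) (factors γ + factors δ) :=
      factors_unique (fun x hx => (prime_of_factor _ hx).irreducible)
        (fun x hx => by
          rcases Multiset.mem_add.mp hx with h' | h' <;>
            exact (prime_of_factor _ h').irreducible) hprod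
    have key : (factors (γ * δ)).map (fun π => GaussianInt.toComplex (quarticPrime α π))
        = (factors γ + factors δ).map (fun π => GaussianInt.toComplex (quarticPrime α π)) := by
      rw [← Multiset.rel_eq, Multiset.rel_map]
      refine hrel.mono ?_
      intro a ha b hb hab
      have hap : Prime a := prime_of_factor _ ha
      congr 1
      exact quarticPrime_assoc hap
        (not_two_of_factor (hoγ.mul_left hoδ) hap (dvd_of_mem_factors ha))
        (not_dvd_of_coprime h hap (dvd_of_mem_factors ha)) hab
    rw [key, Multiset.map_add, Multiset.prod_add]
  · rw [quarticSym, if_neg h]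
    have : ¬ (IsCoprime α γ ∧ IsCoprime α δ) := fun ⟨h1, h2⟩ => h (h1.mul_right h2)
    rcases not_and_or.mp this with h' | h'
    · rw [quarticSym, if_neg h', zero_mul]
    · rw [show quarticSym α δ = 0 from if_neg h', mul_zero]

lemma quarticSym_one_right (α : Zi) : quarticSym α 1 = 1 := by
  rw [quarticSym, if_pos isCoprime_one_right, factors_one]
  simp

lemma quarticSym_pow {α γ : Zi} (hγ : γ ≠ 0) (ho : IsCoprime γ lam) (n : ℕ) :
    quarticSym α (γ ^ n) = quarticSym α γ ^ n := by
  induction n with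
  | zero => simp [quarticSym_one_right]
  | succ n ih =>
      rw [pow_succ, quarticSym_mul (pow_ne_zero _ hγ) hγ (ho.pow_left) ho, ih, pow_succ]

lemma isCoprime_of_dvd_sub {α β γ : Zi} (hαγ : IsCoprime α γ) (hd : γ ∣ α - β) :
    IsCoprime β γ := by
  obtain ⟨t, ht⟩ := hd
  obtain ⟨a, b, hab⟩ := hαγ
  exact ⟨a, b + a * t, by linear_combination hab - a * ht⟩

lemma quarticSym_congr {α β γ : Zi} (hodd : IsCoprime γ lam) (hαγ : IsCoprime α γ)
    (hd : γ ∣ α - β) : quarticSym α γ = quarticSym β γ := by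
  have hβγ : IsCoprime β γ := isCoprime_of_dvd_sub hαγ hd
  rw [quarticSym, if_pos hαγ, quarticSym, if_pos hβγ]
  congr 1
  apply Multiset.map_congr rfl
  intro π hπ
  have hp : Prime π := prime_of_factor _ hπ
  congr 1
  exact quarticPrime_congr hp (not_two_of_factor hodd hp (dvd_of_mem_factors hπ))
    (not_dvd_of_coprime hαγ hp (dvd_of_mem_factors hπ)) ((dvd_of_mem_factors hπ).trans hd)

lemma quarticSym_one_left {γ : Zi} (hodd : IsCoprime γ lam) : quarticSym 1 γ = 1 := by
  rw [quarticSym, if_pos isCoprime_one_left]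
  apply Multiset.prod_eq_one
  intro x hx
  obtain ⟨π, hπ, rfl⟩ := Multiset.mem_map.mp hx
  have hp : Prime π := prime_of_factor _ hπ
  rw [quarticPrime_one hp (not_two_of_factor hodd hp (dvd_of_mem_factors hπ))]
  simp

lemma quarticSym_prime {α π : Zi} (hπ : Prime π) (h2 : ¬ π ∣ 2) (hα : ¬ π ∣ α) :
    quarticSym α π = GaussianInt.toComplex (quarticPrime α π) := by
  have hcop : IsCoprime α π := ((hπ.coprime_iff_not_dvd).mpr hα).symm
  rw [quarticSym, if_pos hcop]
  have hrel : Multiset.Rel Associated (factors π) {π} :=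
    factors_unique (fun x hx => (prime_of_factor _ hx).irreducible)
      (fun x hx => by rw [Multiset.mem_singleton] at hx; subst hx; exact hπ.irreducible)
      (by rw [Multiset.prod_singleton]; exact factors_prod hπ.ne_zero)
  obtain ⟨ρ, hρs⟩ := Multiset.card_eq_one.mp
    ((Multiset.card_eq_card_of_rel hrel).trans (Multiset.card_singleton π))
  have hρπ : Associated ρ π := by
    rw [hρs] at hrel
    rcases Multiset.rel_cons_left.mp hrel with ⟨b, t', hrb, hrt, hbt⟩
    have ht' : t' = 0 := by
      have h := congrArg Multiset.card hbt
      simp at h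
      exact h
    subst ht'
    rw [Multiset.cons_zero, Multiset.singleton_inj] at hbt
    exact hbt ▸ hrb
  rw [hρs, Multiset.map_singleton, Multiset.prod_singleton]
  congr 1
  exact (quarticPrime_assoc hπ h2 hα hρπ.symm).symm

/-! ### part 3 helpers -/

lemma exists_common_prime {a b : Zi} (h : ¬ IsCoprime a b) (hb : b ≠ 0) :
    ∃ p : Zi, Prime p ∧ p ∣ a ∧ p ∣ b := by
  classical
  have hg : ¬ IsUnit (EuclideanDomain.gcd a b) :=
    fun hu => h (EuclideanDomain.gcd_isUnit_iff.mp hu)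
  have hg0 : EuclideanDomain.gcd a b ≠ 0 := by
    intro h0
    exact hb (EuclideanDomain.gcd_eq_zero_iff.mp h0).2
  obtain ⟨p, hpirr, hpd⟩ := WfDvdMonoid.exists_irreducible_factor hg hg0
  exact ⟨p, hpirr.prime, hpd.trans (EuclideanDomain.gcd_dvd_left a b),
    hpd.trans (EuclideanDomain.gcd_dvd_right a b)⟩

lemma crt {a b : Zi} (h : IsCoprime a b) (x y : Zi) : ∃ z, a ∣ z - x ∧ b ∣ z - y := by
  obtain ⟨u, v, huv⟩ := h
  exact ⟨u * a * y + v * b * x, ⟨u * (y - x), by linear_combination x * huv⟩,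
    ⟨v * (x - y), by linear_combination y * huv⟩⟩

lemma squarefree_dvd_of_prime_dvd {r m : Zi} (hr : Squarefree r) (hm : m ≠ 0)
    (h : ∀ p : Zi, Prime p → p ∣ r → p ∣ m) : r ∣ m := by
  classical
  letI : NormalizationMonoid Zi :=
    (UniqueFactorizationMonoid.strongNormalizationMonoid (α := Zi)).toNormalizationMonoid
  rw [UniqueFactorizationMonoid.dvd_iff_normalizedFactors_le_normalizedFactors hr.ne_zero hm]
  refine (Multiset.le_iff_subset
    ((UniqueFactorizationMonoid.squarefree_iff_nodup_normalizedFactors hr.ne_zero).mp hr)).mpr ?_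
  intro p hp
  have hpp : Prime p := UniqueFactorizationMonoid.prime_of_normalized_factor p hp
  obtain ⟨q, hq, hpq⟩ := UniqueFactorizationMonoid.exists_mem_normalizedFactors_of_dvd hm
    hpp.irreducible (h p hpp (UniqueFactorizationMonoid.dvd_of_mem_normalizedFactors hp))
  have hpq' : p = q := by
    rw [← UniqueFactorizationMonoid.normalize_normalized_factor p hp,
      ← UniqueFactorizationMonoid.normalize_normalized_factor q hq]
    exact normalize_eq_normalize hpq.dvd hpq.symm.dvd
  rwa [hpq']

lemma norm_one_cases {u : Zi} (hn : (Zsqrtd.norm u).natAbs = 1) :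
    u = 1 ∨ u = -1 ∨ u = ⟨0,1⟩ ∨ u = ⟨0,-1⟩ := by
  have hnn : 0 ≤ Zsqrtd.norm u := Zsqrtd.norm_nonneg (by norm_num) u
  have h1 : Zsqrtd.norm u = 1 := by omega
  simp only [Zsqrtd.norm] at h1
  have h2 : u.re * u.re + u.im * u.im = 1 := by linarith
  obtain ⟨a, b⟩ := u
  simp only [Zsqrtd.ext_iff] at *
  have ha1 : -1 ≤ a := by nlinarith [mul_self_nonneg (a + 1), mul_self_nonneg b]
  have ha2 : a ≤ 1 := by nlinarith [mul_self_nonneg (a - 1), mul_self_nonneg b]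
  have hb1 : -1 ≤ b := by nlinarith [mul_self_nonneg (b + 1), mul_self_nonneg a]
  have hb2 : b ≤ 1 := by nlinarith [mul_self_nonneg (b - 1), mul_self_nonneg a]
  interval_cases a <;> interval_cases b <;> simp_all <;> omega

lemma eq_one_of_unit_mod {u : Zi} (hu : IsUnit u) (h : lam ^ 3 ∣ u - 1) : u = 1 := by
  have hcases := norm_one_cases (Zsqrtd.norm_eq_one_iff.mpr hu)
  have key : ∀ w : Zi, lam ^ 3 ∣ w → Ni w = 2 ∨ Ni w = 4 → False := by
    rintro w ⟨c, hc⟩ hw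
    have h8 : Ni w = 8 * Ni c := by
      rw [hc, Ni, Zsqrtd.norm_mul]
      have : Zsqrtd.norm (lam ^ 3) = 8 := by decide
      rw [this]; rfl
    have := norm_nonneg' c
    omega
  rcases hcases with rfl | rfl | rfl | rfl
  · rfl
  · exact absurd (key _ h (Or.inr (by decide))) (by simp)
  · exact absurd (key _ h (Or.inl (by decide))) (by simp)
  · exact absurd (key _ h (Or.inl (by decide))) (by simp)

end QC

/-- factorization of the quartic character `χ_q`, its conductor
`rad(q) = q₁q₂q₃q₄`, and primitivity iff `q₄ = 1`. -/
theorem quartic_char_factorization (q q₁ q₂ q₃ q₄ q₅ : Zi)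
    (hq : q = q₁ * q₂ ^ 2 * q₃ ^ 3 * q₄ ^ 4 * q₅ ^ 4)
    (h1 : lam ^ 3 ∣ q₁ - 1) (h2 : lam ^ 3 ∣ q₂ - 1) (h3 : lam ^ 3 ∣ q₃ - 1)
    (h4 : lam ^ 3 ∣ q₄ - 1) (h5 : lam ^ 3 ∣ q₅ - 1)
    (hsf : Squarefree (q₁ * q₂ * q₃ * q₄))
    (h12 : IsCoprime q₁ q₂) (h13 : IsCoprime q₁ q₃) (h14 : IsCoprime q₁ q₄)
    (h23 : IsCoprime q₂ q₃) (h24 : IsCoprime q₂ q₄) (h34 : IsCoprime q₃ q₄)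
    (h5rad : ∀ π : Zi, Prime π → π ∣ q₅ → π ∣ q₁ * q₂ * q₃ * q₄) :
    (∀ α : Zi, quarticSym α q =
        quarticSym α q₁ * quarticSym α q₂ ^ 2 * (starRingEnd ℂ) (quarticSym α q₃) *
          (if IsCoprime α q₄ then 1 else 0)) ∧
    FactorsThroughMod q (q₁ * q₂ * q₃ * q₄) ∧
    (q₄ = 1 ↔ ∀ m : Zi, m ∣ q → FactorsThroughMod q m → q₁ * q₂ * q₃ * q₄ ∣ m) := by
  have ho1 := QC.isCoprime_lam h1
  have ho2 := QC.isCoprime_lam h2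
  have ho3 := QC.isCoprime_lam h3
  have ho4 := QC.isCoprime_lam h4
  have ho5 := QC.isCoprime_lam h5
  have hn1 := QC.ne_zero_of_mod h1
  have hn2 := QC.ne_zero_of_mod h2
  have hn3 := QC.ne_zero_of_mod h3
  have hn4 := QC.ne_zero_of_mod h4
  have hn5 := QC.ne_zero_of_mod h5
  have horad : IsCoprime (q₁ * q₂ * q₃ * q₄) lam :=
    ((ho1.mul_left ho2).mul_left ho3).mul_left ho4
  have hoq : IsCoprime q lam := by
    rw [hq]
    exact (((ho1.mul_left ho2.pow_left).mul_left ho3.pow_left).mul_left ho4.pow_left).mul_left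
      ho5.pow_left
  have hqne : q ≠ 0 := by
    rw [hq]
    exact mul_ne_zero (mul_ne_zero (mul_ne_zero (mul_ne_zero hn1 (pow_ne_zero _ hn2))
      (pow_ne_zero _ hn3)) (pow_ne_zero _ hn4)) (pow_ne_zero _ hn5)
  have hd1 : q₁ ∣ q := ⟨q₂ ^ 2 * q₃ ^ 3 * q₄ ^ 4 * q₅ ^ 4, by rw [hq]; ring⟩
  have hd2 : q₂ ∣ q := ⟨q₁ * q₂ * q₃ ^ 3 * q₄ ^ 4 * q₅ ^ 4, by rw [hq]; ring⟩
  have hd3 : q₃ ∣ q := ⟨q₁ * q₂ ^ 2 * q₃ ^ 2 * q₄ ^ 4 * q₅ ^ 4, by rw [hq]; ring⟩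
  have hd4 : q₄ ∣ q := ⟨q₁ * q₂ ^ 2 * q₃ ^ 3 * q₄ ^ 3 * q₅ ^ 4, by rw [hq]; ring⟩
  have hd5 : q₅ ∣ q := ⟨q₁ * q₂ ^ 2 * q₃ ^ 3 * q₄ ^ 4 * q₅ ^ 3, by rw [hq]; ring⟩
  have P1 : ∀ α : Zi, quarticSym α q =
      quarticSym α q₁ * quarticSym α q₂ ^ 2 * (starRingEnd ℂ) (quarticSym α q₃) *
        (if IsCoprime α q₄ then 1 else 0) := by
    intro α
    by_cases hc : IsCoprime α q
    · have hc1 : IsCoprime α q₁ := hc.of_isCoprime_of_dvd_right hd1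
      have hc2 : IsCoprime α q₂ := hc.of_isCoprime_of_dvd_right hd2
      have hc3 : IsCoprime α q₃ := hc.of_isCoprime_of_dvd_right hd3
      have hc4 : IsCoprime α q₄ := hc.of_isCoprime_of_dvd_right hd4
      have hc5 : IsCoprime α q₅ := hc.of_isCoprime_of_dvd_right hd5
      have hS : quarticSym α q = quarticSym α q₁ * quarticSym α q₂ ^ 2 *
          quarticSym α q₃ ^ 3 * quarticSym α q₄ ^ 4 * quarticSym α q₅ ^ 4 := by
        rw [hq]
        rw [QC.quarticSym_mul (mul_ne_zero (mul_ne_zero (mul_ne_zero hn1 (pow_ne_zero _ hn2))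
            (pow_ne_zero _ hn3)) (pow_ne_zero _ hn4)) (pow_ne_zero _ hn5)
            (((ho1.mul_left ho2.pow_left).mul_left ho3.pow_left).mul_left ho4.pow_left)
            ho5.pow_left]
        rw [QC.quarticSym_mul (mul_ne_zero (mul_ne_zero hn1 (pow_ne_zero _ hn2))
            (pow_ne_zero _ hn3)) (pow_ne_zero _ hn4)
            ((ho1.mul_left ho2.pow_left).mul_left ho3.pow_left) ho4.pow_left]
        rw [QC.quarticSym_mul (mul_ne_zero hn1 (pow_ne_zero _ hn2)) (pow_ne_zero _ hn3)
            (ho1.mul_left ho2.pow_left) ho3.pow_left]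
        rw [QC.quarticSym_mul hn1 (pow_ne_zero _ hn2) ho1 ho2.pow_left]
        rw [QC.quarticSym_pow hn2 ho2, QC.quarticSym_pow hn3 ho3, QC.quarticSym_pow hn4 ho4,
          QC.quarticSym_pow hn5 ho5]
      rw [hS, QC.quarticSym_pow_four hc4 ho4, QC.quarticSym_pow_four hc5 ho5, if_pos hc4,
        QC.quarticSym_conj ho3]
      ring
    · rw [show quarticSym α q = 0 from if_neg hc]
      by_cases hc1 : IsCoprime α q₁
      · by_cases hc2 : IsCoprime α q₂
        · by_cases hc3 : IsCoprime α q₃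
          · by_cases hc4 : IsCoprime α q₄
            · exfalso
              have hc5 : IsCoprime α q₅ := by
                by_contra hc5
                obtain ⟨p, hp, hpa, hpb⟩ := QC.exists_common_prime hc5 hn5
                rcases hp.dvd_or_dvd (h5rad p hp hpb) with h' | h'
                · rcases hp.dvd_or_dvd h' with h'' | h''
                  · rcases hp.dvd_or_dvd h'' with h''' | h'''
                    · exact QC.not_dvd_of_coprime hc1 hp h''' hpa
                    · exact QC.not_dvd_of_coprime hc2 hp h''' hpa
                  · exact QC.not_dvd_of_coprime hc3 hp h'' hpa
                · exact QC.not_dvd_of_coprime hc4 hp h' hpa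
              exact hc (by
                rw [hq]
                exact (((hc1.mul_right hc2.pow_right).mul_right hc3.pow_right).mul_right
                  hc4.pow_right).mul_right hc5.pow_right)
            · rw [if_neg hc4]; ring
          · rw [show quarticSym α q₃ = 0 from if_neg hc3]; simp
        · rw [show quarticSym α q₂ = 0 from if_neg hc2]; ring
      · rw [show quarticSym α q₁ = 0 from if_neg hc1]; ring
  have P2 : FactorsThroughMod q (q₁ * q₂ * q₃ * q₄) := by
    intro α β hα hβ hd
    have e1 : q₁ ∣ q₁ * q₂ * q₃ * q₄ := ⟨q₂ * q₃ * q₄, by ring⟩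
    have e2 : q₂ ∣ q₁ * q₂ * q₃ * q₄ := ⟨q₁ * q₃ * q₄, by ring⟩
    have e3 : q₃ ∣ q₁ * q₂ * q₃ * q₄ := ⟨q₁ * q₂ * q₄, by ring⟩
    rw [P1 α, P1 β,
      QC.quarticSym_congr ho1 (hα.of_isCoprime_of_dvd_right hd1) (e1.trans hd),
      QC.quarticSym_congr ho2 (hα.of_isCoprime_of_dvd_right hd2) (e2.trans hd),
      QC.quarticSym_congr ho3 (hα.of_isCoprime_of_dvd_right hd3) (e3.trans hd),
      if_pos (hα.of_isCoprime_of_dvd_right hd4), if_pos (hβ.of_isCoprime_of_dvd_right hd4)]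
  refine ⟨P1, P2, ?_, ?_⟩
  · intro hq4 m hm hft
    have hm0 : m ≠ 0 := fun h0 => hqne (by rwa [h0, zero_dvd_iff] at hm)
    apply QC.squarefree_dvd_of_prime_dvd hsf hm0
    intro π hπ hπrad
    by_contra hπm
    have hπodd : ¬ π ∣ 2 := QC.not_two_of_factor horad hπ hπrad
    obtain ⟨x, hx1, hx2⟩ := QC.exists_nonresidue hπ hπodd
    have hfin : FiniteMultiplicity π q := FiniteMultiplicity.of_prime_left hπ hqne
    obtain ⟨c, hqvc, hπc⟩ := hfin.exists_eq_pow_mul_and_not_dvd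
    have hπm' : IsCoprime π m := hπ.coprime_iff_not_dvd.mpr hπm
    have hmc : m ∣ c := (hπm'.symm.pow_right).dvd_of_dvd_mul_left (by rw [← hqvc]; exact hm)
    obtain ⟨A, hA1, hA2⟩ := QC.crt (hπ.coprime_iff_not_dvd.mpr hπc) x 1
    have hπA : ¬ π ∣ A := fun h' => hx1 (by
      have hh := dvd_sub h' hA1
      rwa [show A - (A - x) = x by ring] at hh)
    have hdvd_c : ∀ e : Zi, e ∣ q → ¬ π ∣ e → e ∣ c := by
      intro e he hπe
      exact ((hπ.coprime_iff_not_dvd.mpr hπe).symm.pow_right).dvd_of_dvd_mul_left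
        (by rw [← hqvc]; exact he)
    have hcopAc : IsCoprime A c := by
      obtain ⟨t, ht⟩ := hA2
      exact ⟨1, -t, by linear_combination ht⟩
    have hcopAq : IsCoprime A q := by
      rw [hqvc]
      exact ((hπ.coprime_iff_not_dvd.mpr hπA).symm.pow_right).mul_right hcopAc
    have hAq1 : quarticSym A q = 1 := by
      rw [hft A 1 hcopAq isCoprime_one_left (hmc.trans hA2), QC.quarticSym_one_left hoq]
    obtain ⟨hu4, hud⟩ := QC.quarticPrime_spec hπ hπodd hx1
    set u := quarticPrime x π with hu
    have hu2 : ¬ π ∣ u ^ 2 - 1 := by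
      intro h'
      apply hx2
      have hh : π ∣ x ^ (2 * ((Ni π - 1) / 4).toNat) - u ^ 2 := by
        have hh' : π ∣ (x ^ ((Ni π - 1) / 4).toNat - u) * (x ^ ((Ni π - 1) / 4).toNat + u) :=
          hud.mul_right _
        rwa [show (x ^ ((Ni π - 1) / 4).toNat - u) * (x ^ ((Ni π - 1) / 4).toNat + u)
          = x ^ (2 * ((Ni π - 1) / 4).toNat) - u ^ 2 by rw [two_mul, pow_add]; ring] at hh'
      have hh2 := dvd_add hh h'
      rwa [show x ^ (2 * ((Ni π - 1) / 4).toNat) - u ^ 2 + (u ^ 2 - 1)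
        = x ^ (2 * ((Ni π - 1) / 4).toNat) - 1 by ring] at hh2
    have hu2' : u ^ 2 ≠ 1 := fun h' => hu2 (by rw [h', sub_self]; exact dvd_zero π)
    have hU4 : (GaussianInt.toComplex u) ^ 4 = 1 := by rw [← map_pow, hu4, map_one]
    have hU2 : (GaussianInt.toComplex u) ^ 2 ≠ 1 := by
      intro h'
      apply hu2'
      apply GaussianInt.toComplex_inj.mp
      rw [map_pow, h', map_one]
    have hU1 : GaussianInt.toComplex u ≠ 1 := fun h' => hU2 (by rw [h']; ring)
    have hU3 : (GaussianInt.toComplex u) ^ 3 ≠ 1 := by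
      intro h'
      apply hU1
      rw [← hU4, show (4 : ℕ) = 3 + 1 from rfl, pow_succ, h', one_mul]
    have hqpA : quarticPrime A π = u := QC.quarticPrime_congr hπ hπodd hπA hA1
    have hsym_one : ∀ e : Zi, e ∣ q → ¬ π ∣ e → IsCoprime e lam → quarticSym A e = 1 := by
      intro e he hπe hoe
      rw [QC.quarticSym_congr hoe (hcopAq.of_isCoprime_of_dvd_right he)
        ((hdvd_c e he hπe).trans hA2), QC.quarticSym_one_left hoe]
    have hS : quarticSym A q = quarticSym A q₁ * quarticSym A q₂ ^ 2 *
        quarticSym A q₃ ^ 3 * quarticSym A q₄ ^ 4 * quarticSym A q₅ ^ 4 := by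
      rw [hq]
      rw [QC.quarticSym_mul (mul_ne_zero (mul_ne_zero (mul_ne_zero hn1 (pow_ne_zero _ hn2))
          (pow_ne_zero _ hn3)) (pow_ne_zero _ hn4)) (pow_ne_zero _ hn5)
          (((ho1.mul_left ho2.pow_left).mul_left ho3.pow_left).mul_left ho4.pow_left)
          ho5.pow_left]
      rw [QC.quarticSym_mul (mul_ne_zero (mul_ne_zero hn1 (pow_ne_zero _ hn2))
          (pow_ne_zero _ hn3)) (pow_ne_zero _ hn4)
          ((ho1.mul_left ho2.pow_left).mul_left ho3.pow_left) ho4.pow_left]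
      rw [QC.quarticSym_mul (mul_ne_zero hn1 (pow_ne_zero _ hn2)) (pow_ne_zero _ hn3)
          (ho1.mul_left ho2.pow_left) ho3.pow_left]
      rw [QC.quarticSym_mul hn1 (pow_ne_zero _ hn2) ho1 ho2.pow_left]
      rw [QC.quarticSym_pow hn2 ho2, QC.quarticSym_pow hn3 ho3, QC.quarticSym_pow hn4 ho4,
        QC.quarticSym_pow hn5 ho5]
    have hS4 : quarticSym A q₄ ^ 4 = 1 :=
      QC.quarticSym_pow_four (hcopAq.of_isCoprime_of_dvd_right hd4) ho4
    have hS5 : quarticSym A q₅ ^ 4 = 1 :=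
      QC.quarticSym_pow_four (hcopAq.of_isCoprime_of_dvd_right hd5) ho5
    -- extract the prime factor
    have hπ123 : π ∣ q₁ * q₂ * q₃ := by
      rcases hπ.dvd_or_dvd hπrad with h' | h'
      · exact h'
      · exfalso
        rw [hq4] at h'
        exact QC.not_dvd_one hπ h'
    have extract : ∀ qi : Zi, π ∣ qi → qi ∣ q → qi ∣ q₁ * q₂ * q₃ * q₄ → qi ≠ 0 →
        IsCoprime qi lam → quarticSym A qi = GaussianInt.toComplex u := by
      intro qi hπqi hqiq hqirad hqine hoqi
      obtain ⟨d, hdq⟩ := hπqi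
      have hπd : ¬ π ∣ d := by
        intro hh
        apply hπ.not_unit
        apply hsf π
        exact (Dvd.dvd.trans (by rw [hdq]; exact mul_dvd_mul_left π hh) hqirad)
      have hdne : d ≠ 0 := fun h0 => hqine (by rw [hdq, h0, mul_zero])
      have hod : IsCoprime d lam := by rw [hdq] at hoqi; exact hoqi.of_mul_left_right
      have hoπ : IsCoprime π lam := by rw [hdq] at hoqi; exact hoqi.of_mul_left_left
      have hdq' : d ∣ q := (show d ∣ qi from ⟨π, by rw [hdq]; ring⟩).trans hqiq
      rw [hdq, QC.quarticSym_mul hπ.ne_zero hdne hoπ hod,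
        QC.quarticSym_prime hπ hπodd hπA, hqpA, hsym_one d hdq' hπd hod]
      ring
    have not_dvd_of_cop : ∀ a b : Zi, IsCoprime a b → π ∣ a → ¬ π ∣ b := by
      intro a b hab ha hb
      exact hπ.not_unit (hab.isUnit_of_dvd' ha hb)
    rcases hπ.dvd_or_dvd hπ123 with h' | h3'
    · rcases hπ.dvd_or_dvd h' with h1' | h2'
      · have hv := extract q₁ h1' hd1 ⟨q₂ * q₃ * q₄, by ring⟩ hn1 ho1
        rw [hS, hv, hsym_one q₂ hd2 (not_dvd_of_cop q₁ q₂ h12 h1') ho2,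
          hsym_one q₃ hd3 (not_dvd_of_cop q₁ q₃ h13 h1') ho3, hS4, hS5] at hAq1
        exact hU1 (by simpa using hAq1)
      · have hv := extract q₂ h2' hd2 ⟨q₁ * q₃ * q₄, by ring⟩ hn2 ho2
        rw [hS, hv, hsym_one q₁ hd1 (not_dvd_of_cop q₂ q₁ h12.symm h2') ho1,
          hsym_one q₃ hd3 (not_dvd_of_cop q₂ q₃ h23 h2') ho3, hS4, hS5] at hAq1
        exact hU2 (by simpa using hAq1)
    · have hv := extract q₃ h3' hd3 ⟨q₁ * q₂ * q₄, by ring⟩ hn3 ho3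
      rw [hS, hv, hsym_one q₁ hd1 (not_dvd_of_cop q₃ q₁ h13.symm h3') ho1,
        hsym_one q₂ hd2 (not_dvd_of_cop q₃ q₂ h23.symm h3') ho2, hS4, hS5] at hAq1
      exact hU3 (by simpa using hAq1)
  · intro H
    have hft3 : FactorsThroughMod q (q₁ * q₂ * q₃) := by
      intro α β hα hβ hd
      have e1 : q₁ ∣ q₁ * q₂ * q₃ := ⟨q₂ * q₃, by ring⟩
      have e2 : q₂ ∣ q₁ * q₂ * q₃ := ⟨q₁ * q₃, by ring⟩
      have e3 : q₃ ∣ q₁ * q₂ * q₃ := ⟨q₁ * q₂, by ring⟩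
      rw [P1 α, P1 β,
        QC.quarticSym_congr ho1 (hα.of_isCoprime_of_dvd_right hd1) (e1.trans hd),
        QC.quarticSym_congr ho2 (hα.of_isCoprime_of_dvd_right hd2) (e2.trans hd),
        QC.quarticSym_congr ho3 (hα.of_isCoprime_of_dvd_right hd3) (e3.trans hd),
        if_pos (hα.of_isCoprime_of_dvd_right hd4), if_pos (hβ.of_isCoprime_of_dvd_right hd4)]
    have h3q : q₁ * q₂ * q₃ ∣ q := ⟨q₂ * q₃ ^ 2 * q₄ ^ 4 * q₅ ^ 4, by rw [hq]; ring⟩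
    obtain ⟨t, ht⟩ := H _ h3q hft3
    have h123 : q₁ * q₂ * q₃ ≠ 0 := mul_ne_zero (mul_ne_zero hn1 hn2) hn3
    have hunit : IsUnit q₄ := by
      refine IsUnit.of_mul_eq_one (a := q₄) t ?_
      apply mul_left_cancel₀ h123
      rw [mul_one]
      linear_combination -ht
    exact QC.eq_one_of_unit_mod hunit h4
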